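/- arXiv:1904.06369 — 5 statements merged into one kernel-verified Lean document; each statement's English description precedes it below -/
import Mathlib

section
/- The formal power series identity Ψ(q)^2 = θ(q) · Ψ(q^2) holds, where Ψ(q) = Σ_{n≥0} q^{n(n+1)/2} and θ(q) = Σ_{n∈ℤ} q^{n^2}. -/
private def Fmap : ℕ × ℕ → ℤ × ℕ := fun p =>
  if p.1 % 2 = p.2 % 2 then (((p.1 : ℤ) - p.2) / 2, (p.1 + p.2) / 2)
  else if p.2 < p.1 then (((p.1 : ℤ) + p.2 + 1) / 2, (p.1 - p.2 - 1) / 2)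
  else (-(((p.1 : ℤ) + p.2 + 1) / 2), (p.2 - p.1 - 1) / 2)

private def Gmap : ℤ × ℕ → ℕ × ℕ := fun q =>
  if q.1 ≤ (q.2 : ℤ) ∧ -q.1 ≤ (q.2 : ℤ) then (((q.2 : ℤ) + q.1).toNat, ((q.2 : ℤ) - q.1).toNat)
  else if 0 < q.1 then ((q.1 + q.2).toNat, (q.1 - q.2 - 1).toNat)
  else ((-q.1 - q.2 - 1).toNat, (-q.1 + q.2).toNat)

private lemma hGF (a b : ℕ) : Gmap (Fmap (a, b)) = (a, b) := by
  simp only [Fmap]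
  split_ifs with h1 h2 <;>
    (simp only [Gmap]; split_ifs <;> (rw [Prod.ext_iff]; constructor <;> simp <;> omega))

private lemma hFG (x : ℤ) (n : ℕ) : Fmap (Gmap (x, n)) = (x, n) := by
  simp only [Gmap]
  split_ifs with h1 h2 <;>
    (simp only [Fmap]; split_ifs <;> (rw [Prod.ext_iff]; constructor <;> simp <;> omega))

private lemma hFmem (m a b : ℕ) (h : a * (a + 1) + b * (b + 1) = 2 * m) :
    (Fmap (a, b)).1 ^ 2 + ((Fmap (a, b)).2 : ℤ) * ((Fmap (a, b)).2 + 1) = (m : ℤ) := by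
  have hab : (a : ℤ) * (a + 1) + (b : ℤ) * ((b : ℤ) + 1) = 2 * (m : ℤ) := by exact_mod_cast h
  simp only [Fmap]
  split_ifs with h1 h2
  · obtain ⟨t, ht⟩ : ∃ t : ℕ, a + b = 2 * t := ⟨(a + b) / 2, by omega⟩
    have hx : ((a : ℤ) - b) / 2 = (a : ℤ) - t := by omega
    have hn : (a + b) / 2 = t := by omega
    have hB : (b : ℤ) = 2 * t - a := by omega
    rw [hB] at hab
    rw [hx, hn]
    ring_nf at hab ⊢
    linarith
  · obtain ⟨t, ht⟩ : ∃ t : ℕ, a + b + 1 = 2 * t := ⟨(a + b + 1) / 2, by omega⟩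
    obtain ⟨s, hs⟩ : ∃ s : ℕ, a = b + 1 + 2 * s := ⟨(a - b - 1) / 2, by omega⟩
    have hx : ((a : ℤ) + b + 1) / 2 = (t : ℤ) := by omega
    have hn : (a - b - 1) / 2 = s := by omega
    have hA : (a : ℤ) = t + s := by omega
    have hB : (b : ℤ) = t - s - 1 := by omega
    rw [hA, hB] at hab
    rw [hx, hn]
    ring_nf at hab ⊢
    linarith
  · obtain ⟨t, ht⟩ : ∃ t : ℕ, a + b + 1 = 2 * t := ⟨(a + b + 1) / 2, by omega⟩
    obtain ⟨s, hs⟩ : ∃ s : ℕ, b = a + 1 + 2 * s := ⟨(b - a - 1) / 2, by omega⟩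
    have hx : ((a : ℤ) + b + 1) / 2 = (t : ℤ) := by omega
    have hn : (b - a - 1) / 2 = s := by omega
    have hA : (a : ℤ) = t - s - 1 := by omega
    have hB : (b : ℤ) = t + s := by omega
    rw [hA, hB] at hab
    rw [hx, hn]
    ring_nf at hab ⊢
    linarith

private lemma hGmem (m : ℕ) (x : ℤ) (n : ℕ) (h : x ^ 2 + (n : ℤ) * ((n : ℤ) + 1) = (m : ℤ)) :
    (Gmap (x, n)).1 * ((Gmap (x, n)).1 + 1) + (Gmap (x, n)).2 * ((Gmap (x, n)).2 + 1) = 2 * m := by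
  simp only [Gmap]
  split_ifs with h1 h2
  · have hA : ((((n : ℤ) + x).toNat : ℤ)) = n + x := by omega
    have hB : ((((n : ℤ) - x).toNat : ℤ)) = n - x := by omega
    zify
    rw [hA, hB]
    ring_nf at h ⊢
    linarith
  · have hA : (((x + n).toNat : ℤ)) = x + n := by omega
    have hB : (((x - n - 1).toNat : ℤ)) = x - n - 1 := by omega
    zify
    rw [hA, hB]
    ring_nf at h ⊢
    linarith
  · have hA : (((-x - n - 1).toNat : ℤ)) = -x - n - 1 := by omega
    have hB : (((-x + n).toNat : ℤ)) = -x + n := by omega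
    zify
    rw [hA, hB]
    ring_nf at h ⊢
    linarith

private def mainEquiv (m : ℕ) :
    {p : ℕ × ℕ // p.1 * (p.1 + 1) + p.2 * (p.2 + 1) = 2 * m} ≃
      {q : ℤ × ℕ // q.1 ^ 2 + (q.2 : ℤ) * ((q.2 : ℤ) + 1) = (m : ℤ)} where
  toFun p := ⟨Fmap p.1, hFmem m p.1.1 p.1.2 p.2⟩
  invFun q := ⟨Gmap q.1, hGmem m q.1.1 q.1.2 q.2⟩
  left_inv p := Subtype.ext (hGF p.1.1 p.1.2)
  right_inv q := Subtype.ext (hFG q.1.1 q.1.2)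

private lemma card_conv {α β : Type*} (f : α → ℕ) (g : β → ℕ)
    (hf : ∀ i, {a : α | f a = i}.Finite) (hg : ∀ j, {b : β | g b = j}.Finite) (m : ℕ) :
    ∑ ij ∈ Finset.HasAntidiagonal.antidiagonal m,
      (Nat.card {a : α // f a = ij.1} : ℤ) * (Nat.card {b : β // g b = ij.2} : ℤ) =
      (Nat.card {p : α × β // f p.1 + g p.2 = m} : ℤ) := by
  haveI hfin1 : ∀ i, Fintype {a : α // f a = i} := fun i => (hf i).fintype
  haveI hfin2 : ∀ j, Fintype {b : β // g b = j} := fun j => (hg j).fintype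
  let E : {p : α × β // f p.1 + g p.2 = m} ≃
      Σ ij : (Finset.HasAntidiagonal.antidiagonal m : Finset (ℕ × ℕ)),
        ({a : α // f a = (ij : ℕ × ℕ).1} × {b : β // g b = (ij : ℕ × ℕ).2}) :=
  { toFun := fun p => ⟨⟨(f p.1.1, g p.1.2), Finset.HasAntidiagonal.mem_antidiagonal.2 p.2⟩, ⟨p.1.1, rfl⟩, ⟨p.1.2, rfl⟩⟩
    invFun := fun s => ⟨(s.2.1.1, s.2.2.1), by
      have hm := Finset.HasAntidiagonal.mem_antidiagonal.1 s.1.2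
      rw [s.2.1.2, s.2.2.2]; exact hm⟩
    left_inv := fun p => Subtype.ext rfl
    right_inv := fun s => by
      rcases s with ⟨⟨⟨i, j⟩, hij⟩, ⟨a, ha⟩, ⟨b, hb⟩⟩
      dsimp only at ha hb
      subst ha; subst hb; rfl }
  rw [Nat.card_congr E, Nat.card_eq_fintype_card, Fintype.card_sigma, Nat.cast_sum,
    ← Finset.sum_coe_sort (Finset.HasAntidiagonal.antidiagonal m)]
  exact Finset.sum_congr rfl fun ij _ => by
    rw [Fintype.card_prod, Nat.card_eq_fintype_card, Nat.card_eq_fintype_card]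
    push_cast; ring

/-- `Ψ(q)² = θ(q) · Ψ(q²)` as formal power series over ℤ, where the coefficient of `qᵐ` in
`Ψ(q)` counts `n` with `Tₙ = m`, in `θ(q)` counts integers `x` with `x² = m`, and in `Ψ(q²)`
counts `n` with `n(n+1) = m`. -/
theorem stmt2 :
    (PowerSeries.mk fun m => (Nat.card {n : ℕ // n * (n + 1) / 2 = m} : ℤ)) ^ 2 =
      (PowerSeries.mk fun m => (Nat.card {x : ℤ // x ^ 2 = (m : ℤ)} : ℤ)) *
      (PowerSeries.mk fun m => (Nat.card {n : ℕ // n * (n + 1) = m} : ℤ)) := by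
  have hT : ∀ i, {n : ℕ | n * (n + 1) / 2 = i}.Finite := fun i =>
    (Set.finite_Iic (2 * i + 1)).subset (fun n hn => by
      simp only [Set.mem_setOf_eq] at hn
      simp only [Set.mem_Iic]
      have h1 : n ≤ n * (n + 1) := Nat.le_mul_of_pos_right _ (Nat.succ_pos n)
      set k := n * (n + 1); omega)
  have hθ : ∀ i, {x : ℤ | (x ^ 2).toNat = i}.Finite := fun i =>
    (Set.finite_Icc (-(i : ℤ)) i).subset (fun x hx => by
      simp only [Set.mem_setOf_eq] at hx
      simp only [Set.mem_Icc]
      have h1 : x ≤ x ^ 2 := by nlinarith [sq_nonneg (x - 1)]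
      have h2 : -x ≤ x ^ 2 := by nlinarith [sq_nonneg (x + 1)]
      omega)
  have hU : ∀ j, {n : ℕ | n * (n + 1) = j}.Finite := fun j =>
    (Set.finite_Iic j).subset (fun n hn => by
      simp only [Set.mem_setOf_eq] at hn
      simp only [Set.mem_Iic]
      have h1 : n ≤ n * (n + 1) := Nat.le_mul_of_pos_right _ (Nat.succ_pos n)
      omega)
  ext m
  rw [sq, PowerSeries.coeff_mul, PowerSeries.coeff_mul]
  simp only [PowerSeries.coeff_mk]
  have hθeq : ∀ i : ℕ, (Nat.card {x : ℤ // x ^ 2 = (i : ℤ)} : ℤ) =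
      (Nat.card {x : ℤ // (x ^ 2).toNat = i} : ℤ) := fun i => by
    have key : ∀ x : ℤ, x ^ 2 = (i : ℤ) ↔ (x ^ 2).toNat = i := fun x => by
      constructor
      · intro h; rw [h]; simp
      · intro h; rw [← h, Int.toNat_of_nonneg (sq_nonneg x)]
    rw [Nat.card_congr (Equiv.subtypeEquivRight key)]
  simp only [hθeq]
  rw [card_conv _ _ hT hT m, card_conv _ _ hθ hU m]
  congr 1
  refine Nat.card_congr ?_
  refine (Equiv.subtypeEquivRight fun p => ?_).trans ((mainEquiv m).trans
    (Equiv.subtypeEquivRight fun q => ?_))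
  · obtain ⟨r, hr⟩ := Nat.even_mul_succ_self p.1
    obtain ⟨s, hs⟩ := Nat.even_mul_succ_self p.2
    rw [hr, hs]
    omega
  · have hk : ((q.2 : ℤ)) * ((q.2 : ℤ) + 1) = ((q.2 * (q.2 + 1) : ℕ) : ℤ) := by push_cast; ring
    rw [hk]
    obtain ⟨y, hy⟩ : ∃ y, q.1 ^ 2 = y := ⟨_, rfl⟩
    have hy0 : 0 ≤ y := hy ▸ sq_nonneg q.1
    rw [hy]
    constructor <;> intro <;> omega
end

section
/- For every positive integer n, δ_{2k}(n) = Σ_{a + 2b = n, a,b ≥ 0} r_k(a) · δ_k(b), where δ_k(m) counts representations of m as a sum of k triangular numbers and r_k(m) counts representations of m as a sum of k integer squares. -/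
abbrev Tn (z : ℕ) : ℕ := z * (z + 1) / 2

lemma two_Tn (z : ℕ) : 2 * Tn z = z * (z + 1) :=
  Nat.mul_div_cancel' (Nat.even_mul_succ_self z).two_dvd

lemma le_Tn (z : ℕ) : z ≤ Tn z := by
  have h := two_Tn z
  rcases Nat.eq_zero_or_pos z with hz | hz
  · simp [hz, Tn]
  · nlinarith [Nat.mul_le_mul_left z (show 2 ≤ z + 1 by omega)]

def pFwd : ℕ × ℕ → ℤ × ℕ := fun q =>
  if (q.1 + q.2) % 2 = 0 then ((q.1 : ℤ) - ((q.1 + q.2) / 2 : ℕ), (q.1 + q.2) / 2)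
  else if q.2 < q.1 then ((((q.1 + q.2 + 1) / 2 : ℕ) : ℤ), (q.1 - q.2 - 1) / 2)
  else (-(((q.1 + q.2 + 1) / 2 : ℕ) : ℤ), (q.2 - q.1 - 1) / 2)

def pInv : ℤ × ℕ → ℕ × ℕ := fun q =>
  if q.1.natAbs ≤ q.2 then
    if 0 ≤ q.1 then (q.2 + q.1.natAbs, q.2 - q.1.natAbs)
    else (q.2 - q.1.natAbs, q.2 + q.1.natAbs)
  else
    if 0 ≤ q.1 then (q.1.natAbs + q.2, q.1.natAbs - q.2 - 1)
    else (q.1.natAbs - q.2 - 1, q.1.natAbs + q.2)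

lemma pInv_pFwd (q : ℕ × ℕ) : pInv (pFwd q) = q := by
  obtain ⟨u, v⟩ := q
  simp only [pFwd, pInv]
  split_ifs <;> simp only [Prod.mk.injEq] <;> omega

lemma pFwd_pInv (q : ℤ × ℕ) : pFwd (pInv q) = q := by
  obtain ⟨x, w⟩ := q
  simp only [pFwd, pInv]
  split_ifs <;> simp only [Prod.mk.injEq] <;> omega

def pairEquiv : ℕ × ℕ ≃ ℤ × ℕ := ⟨pFwd, pInv, pInv_pFwd, pFwd_pInv⟩

lemma pInv_invariant (q : ℤ × ℕ) :
    Tn (pInv q).1 + Tn (pInv q).2 = q.1.natAbs ^ 2 + 2 * Tn q.2 := by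
  obtain ⟨x, w⟩ := q
  have key : (pInv (x, w)).1 * ((pInv (x, w)).1 + 1) + (pInv (x, w)).2 * ((pInv (x, w)).2 + 1)
      = 2 * x.natAbs ^ 2 + 2 * (w * (w + 1)) := by
    simp only [pInv]
    split_ifs with h1 h2 h3
    · obtain ⟨d, rfl⟩ := Nat.le.dest h1
      have : x.natAbs + d - x.natAbs = d := by omega
      rw [this]; ring
    · obtain ⟨d, rfl⟩ := Nat.le.dest h1
      have : x.natAbs + d - x.natAbs = d := by omega
      rw [this]; ring
    · obtain ⟨d, hd⟩ := Nat.le.dest (show w + 1 ≤ x.natAbs by omega)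
      have h4 : x.natAbs - w - 1 = d := by omega
      rw [h4, ← hd]; ring
    · obtain ⟨d, hd⟩ := Nat.le.dest (show w + 1 ≤ x.natAbs by omega)
      have h4 : x.natAbs - w - 1 = d := by omega
      rw [h4, ← hd]; ring
  have t1 := two_Tn (pInv (x, w)).1
  have t2 := two_Tn (pInv (x, w)).2
  have t3 := two_Tn w
  simp only at key ⊢
  linarith

lemma pFwd_invariant (q : ℕ × ℕ) :
    Tn q.1 + Tn q.2 = (pFwd q).1.natAbs ^ 2 + 2 * Tn (pFwd q).2 := by
  have := pInv_invariant (pFwd q)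
  rwa [pInv_pFwd] at this

lemma sum_split {M : Type*} [AddCommMonoid M] (k : ℕ) (g : Fin (2 * k) → M) :
    ∑ j, g j = ∑ i : Fin k, (g ⟨i.1, by omega⟩ + g ⟨k + i.1, by omega⟩) := by
  have h : k + k = 2 * k := by omega
  rw [← (finCongr h).sum_comp g, Fin.sum_univ_add, ← Finset.sum_add_distrib]
  exact Finset.sum_congr rfl fun i _ => rfl

instance finiteD (m j : ℕ) : Finite {z : Fin j → ℕ // m = ∑ i, z i * (z i + 1) / 2} := by
  have bound : ∀ (z : {z : Fin j → ℕ // m = ∑ i, z i * (z i + 1) / 2}) i, z.1 i ≤ m := by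
    intro z i
    have h1 : Tn (z.1 i) ≤ ∑ i, Tn (z.1 i) :=
      Finset.single_le_sum (f := fun i => Tn (z.1 i)) (fun _ _ => Nat.zero_le _)
        (Finset.mem_univ i)
    have h2 := le_Tn (z.1 i)
    have h3 : m = ∑ i, Tn (z.1 i) := z.2
    omega
  apply Finite.of_injective (β := Fin j → Fin (m + 1))
    (fun z i => ⟨min (z.1 i) m, by omega⟩)
  intro a b h
  apply Subtype.ext; funext i
  have h1 : min (a.1 i) m = min (b.1 i) m := congrArg Fin.val (congrFun h i)
  rw [min_eq_left (bound a i), min_eq_left (bound b i)] at h1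
  exact h1

instance finiteR (m j : ℕ) : Finite {x : Fin j → ℤ // (m : ℤ) = ∑ i, x i ^ 2} := by
  have bound : ∀ (x : {x : Fin j → ℤ // (m : ℤ) = ∑ i, x i ^ 2}) i,
      (x.1 i).natAbs ≤ m := by
    intro x i
    have h1 : x.1 i ^ 2 ≤ ∑ i, x.1 i ^ 2 :=
      Finset.single_le_sum (f := fun i => x.1 i ^ 2) (fun i _ => sq_nonneg (x.1 i))
        (Finset.mem_univ i)
    rw [← x.2] at h1
    have h2 : ((x.1 i).natAbs ^ 2 : ℤ) ≤ (m : ℤ) := by rw [Int.natAbs_sq]; exact h1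
    have h3 : (x.1 i).natAbs ^ 2 ≤ m := by exact_mod_cast h2
    have h4 : (x.1 i).natAbs ≤ (x.1 i).natAbs ^ 2 := Nat.le_self_pow two_ne_zero _
    omega
  apply Finite.of_injective (β := Fin j → Fin (2 * m + 1))
    (fun x i => ⟨min (x.1 i + (m : ℤ)).toNat (2 * m), by omega⟩)
  intro a b h
  apply Subtype.ext; funext i
  have h1 : min ((a.1 i) + (m : ℤ)).toNat (2 * m) = min ((b.1 i) + (m : ℤ)).toNat (2 * m) :=
    congrArg Fin.val (congrFun h i)
  have ha := bound a i
  have hb := bound b i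
  omega

lemma mycard_sigma {ι : Type*} [Fintype ι] (f : ι → Type*) [∀ i, Finite (f i)] :
    Nat.card ((i : ι) × f i) = ∑ i, Nat.card (f i) := by
  classical
  letI : ∀ i, Fintype (f i) := fun i => Fintype.ofFinite _
  simp [Nat.card_eq_fintype_card, Fintype.card_sigma]

section main

variable (k n : ℕ)

def baseSplit : (Fin (2 * k) → ℕ) ≃ (Fin k → ℕ × ℕ) where
  toFun z := fun i => (z ⟨i.1, by omega⟩, z ⟨k + i.1, by omega⟩)
  invFun y := fun j => if h : j.1 < k then (y ⟨j.1, h⟩).1 else (y ⟨j.1 - k, by omega⟩).2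
  left_inv z := by
    funext j
    dsimp only
    by_cases h : j.1 < k
    · rw [dif_pos h]
    · rw [dif_neg h]
      exact congrArg z (Fin.ext (by simp; omega))
  right_inv y := by
    funext i
    dsimp only
    refine Prod.ext ?_ ?_
    · rw [dif_pos i.2]
    · have h : ¬ (k + i.1 < k) := by omega
      rw [dif_neg h]
      exact congrArg (fun t => (y t).2) (Fin.ext (by simp))

theorem stmt3 (k n : ℕ) (hn : 0 < n) :
    Nat.card {z : Fin (2 * k) → ℕ // n = ∑ i, z i * (z i + 1) / 2} =
      ∑ p ∈ (Finset.range (n + 1) ×ˢ Finset.range (n + 1)).filter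
          (fun p => p.1 + 2 * p.2 = n),
        Nat.card {x : Fin k → ℤ // (p.1 : ℤ) = ∑ i, (x i) ^ 2} *
        Nat.card {z : Fin k → ℕ // p.2 = ∑ i, z i * (z i + 1) / 2} := by
  classical
  set S := (Finset.range (n + 1) ×ˢ Finset.range (n + 1)).filter
      (fun p => p.1 + 2 * p.2 = n) with hS
  have e1 : {z : Fin (2 * k) → ℕ // n = ∑ i, z i * (z i + 1) / 2} ≃
      {y : Fin k → ℕ × ℕ // n = ∑ i, (Tn (y i).1 + Tn (y i).2)} := by
    refine Equiv.subtypeEquiv (baseSplit k) (fun z => ?_)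
    rw [sum_split k (fun j => Tn (z j))]
    exact Iff.rfl
  have e2 : {y : Fin k → ℕ × ℕ // n = ∑ i, (Tn (y i).1 + Tn (y i).2)} ≃
      {y : Fin k → ℤ × ℕ // n = ∑ i, ((y i).1.natAbs ^ 2 + 2 * Tn (y i).2)} := by
    refine Equiv.subtypeEquiv (Equiv.piCongrRight fun _ => pairEquiv) (fun y => ?_)
    constructor
    · intro h
      exact h.trans (Finset.sum_congr rfl fun i _ => pFwd_invariant (y i))
    · intro h
      exact h.trans (Finset.sum_congr rfl fun i _ => (pFwd_invariant (y i)).symm)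
  have e3 : {y : Fin k → ℤ × ℕ // n = ∑ i, ((y i).1.natAbs ^ 2 + 2 * Tn (y i).2)} ≃
      (p : {p : ℕ × ℕ // p ∈ S}) ×
        ({x : Fin k → ℤ // ((p.1.1 : ℕ) : ℤ) = ∑ i, (x i) ^ 2} ×
         {z : Fin k → ℕ // p.1.2 = ∑ i, z i * (z i + 1) / 2}) :=
    { toFun := fun y => ⟨⟨(∑ i, (y.1 i).1.natAbs ^ 2, ∑ i, Tn (y.1 i).2), by
          have hsplit : n = (∑ i, (y.1 i).1.natAbs ^ 2) + 2 * ∑ i, Tn (y.1 i).2 :=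
            y.2.trans (by rw [Finset.sum_add_distrib, Finset.mul_sum])
          simp only [hS, Finset.mem_filter, Finset.mem_product, Finset.mem_range]
          omega⟩,
        ⟨fun i => (y.1 i).1, by push_cast; simp [sq_abs]⟩,
        ⟨fun i => (y.1 i).2, rfl⟩⟩
      invFun := fun q => ⟨fun i => (q.2.1.1 i, q.2.2.1 i), by
        obtain ⟨⟨⟨a, b⟩, hp⟩, ⟨x, hx⟩, ⟨w, hw⟩⟩ := q
        simp only at hx hw ⊢
        have h1 : a + 2 * b = n := by
          have := Finset.mem_filter.1 hp
          simpa using this.2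
        have h2 : a = ∑ i, (x i).natAbs ^ 2 := by
          have hc : (a : ℤ) = ((∑ i, (x i).natAbs ^ 2 : ℕ) : ℤ) := by
            rw [hx]; push_cast; simp [sq_abs]
          exact_mod_cast hc
        have hw' : b = ∑ i, Tn (w i) := hw
        calc n = a + 2 * b := h1.symm
          _ = (∑ i, (x i).natAbs ^ 2) + ∑ i, 2 * Tn (w i) := by
              rw [h2, hw', Finset.mul_sum]
          _ = ∑ i, ((x i).natAbs ^ 2 + 2 * Tn (w i)) := Finset.sum_add_distrib.symm⟩
      left_inv := fun y => rfl
      right_inv := by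
        rintro ⟨⟨⟨a, b⟩, hp⟩, ⟨x, hx⟩, ⟨w, hw⟩⟩
        have h2 : (∑ i, (x i).natAbs ^ 2) = a := by
          have hc : (a : ℤ) = ((∑ i, (x i).natAbs ^ 2 : ℕ) : ℤ) := by
            rw [hx]; push_cast; simp [sq_abs]
          exact_mod_cast hc.symm
        have h3 : (∑ i, Tn (w i)) = b := hw.symm
        subst h2; subst h3
        rfl }
  rw [Nat.card_congr (e1.trans (e2.trans e3)), mycard_sigma]
  rw [← Finset.sum_coe_sort S (fun p => Nat.card {x : Fin k → ℤ // (p.1 : ℤ) = ∑ i, (x i) ^ 2} *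
        Nat.card {z : Fin k → ℕ // p.2 = ∑ i, z i * (z i + 1) / 2})]
  exact Finset.sum_congr rfl fun p _ => Nat.card_prod _ _

end main
end

section
/- For any positive real R, the number of lattice points (z_1,...,z_k) ∈ ℤ^k satisfying Σ_{i=1}^k c_i (z_i - 1/2)^2 ≤ R^2 equals 2^k · Σ_{n=0}^{⌊R^2/2 - h/8⌋} δ_k(C;n), where h = c_1 + ... + c_k, provided R^2/2 ≥ h/8. -/
private def T (w : ℕ) : ℕ := w * (w + 1) / 2

private lemma two_T (w : ℕ) : 2 * T w = w * (w + 1) :=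
  Nat.mul_div_cancel' (Nat.even_mul_succ_self w).two_dvd

private lemma le_T (w : ℕ) : w ≤ T w := by
  unfold T
  rcases Nat.eq_zero_or_pos w with h | h
  · simp [h]
  · rw [Nat.le_div_iff_mul_le (by norm_num)]
    nlinarith

private def np (z : ℤ) : ℕ := if 0 < z then (z - 1).toNat else (-z).toNat

private lemma np_pos (w : ℕ) : np ((w : ℤ) + 1) = w := by
  unfold np; rw [if_pos (by omega)]; omega

private lemma np_neg (w : ℕ) : np (-(w : ℤ)) = w := by
  unfold np; rw [if_neg (by omega)]; omega

private lemma key (z : ℤ) : ((z : ℝ) - 1 / 2) ^ 2 = 2 * (T (np z) : ℝ) + 1 / 4 := by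
  unfold np
  split_ifs with hz
  · set w := (z - 1).toNat with hw
    have hzw : z = (w : ℤ) + 1 := by omega
    have hz' : (z : ℝ) = (w : ℝ) + 1 := by exact_mod_cast congrArg (Int.cast : ℤ → ℝ) hzw
    have h2 : 2 * (T w : ℝ) = (w : ℝ) * ((w : ℝ) + 1) := by exact_mod_cast two_T w
    rw [hz']; linear_combination -h2
  · set w := (-z).toNat with hw
    have hzw : z = -(w : ℤ) := by omega
    have hz' : (z : ℝ) = -(w : ℝ) := by exact_mod_cast congrArg (Int.cast : ℤ → ℝ) hzw
    have h2 : 2 * (T w : ℝ) = (w : ℝ) * ((w : ℝ) + 1) := by exact_mod_cast two_T w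
    rw [hz']; linear_combination -h2

theorem stmt7 (k : ℕ) (c : Fin k → ℕ) (hc : ∀ i, 0 < c i) (R : ℝ) (hR : 0 < R)
    (h : ((∑ i, c i : ℕ) : ℝ) / 8 ≤ R ^ 2 / 2) :
    Nat.card {z : Fin k → ℤ // ∑ i, (c i : ℝ) * ((z i : ℝ) - 1 / 2) ^ 2 ≤ R ^ 2} =
      2 ^ k * ∑ n ∈ Finset.range (⌊R ^ 2 / 2 - ((∑ i, c i : ℕ) : ℝ) / 8⌋₊ + 1),
        Nat.card {z : Fin k → ℕ // n = ∑ i, c i * (z i * (z i + 1) / 2)} := by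
  set N := ⌊R ^ 2 / 2 - ((∑ i, c i : ℕ) : ℝ) / 8⌋₊ with hN
  have hx : (0 : ℝ) ≤ R ^ 2 / 2 - ((∑ i, c i : ℕ) : ℝ) / 8 := by linarith
  have cond_iff : ∀ z : Fin k → ℤ,
      (∑ i, (c i : ℝ) * ((z i : ℝ) - 1 / 2) ^ 2 ≤ R ^ 2) ↔
      (∑ i, c i * T (np (z i))) ≤ N := by
    intro z
    have hs : ∑ i, (c i : ℝ) * ((z i : ℝ) - 1 / 2) ^ 2
        = 2 * ((∑ i, c i * T (np (z i)) : ℕ) : ℝ) + ((∑ i, c i : ℕ) : ℝ) / 4 := by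
      push_cast
      rw [Finset.mul_sum, Finset.sum_div, ← Finset.sum_add_distrib]
      exact Finset.sum_congr rfl fun i _ => by rw [key (z i)]; ring
    rw [hN, Nat.le_floor_iff hx, hs]
    constructor <;> intro h' <;> linarith
  -- finiteness of fibers
  have hfin : ∀ n : ℕ, Finite {w : Fin k → ℕ // n = ∑ i, c i * (w i * (w i + 1) / 2)} := by
    intro n
    have bound : ∀ (w : {w : Fin k → ℕ // n = ∑ i, c i * (w i * (w i + 1) / 2)}) (i),
        w.1 i ≤ n := by
      intro w i
      have h1 : c i * (w.1 i * (w.1 i + 1) / 2) ≤ ∑ j, c j * (w.1 j * (w.1 j + 1) / 2) :=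
        Finset.single_le_sum (f := fun j => c j * (w.1 j * (w.1 j + 1) / 2))
          (fun _ _ => Nat.zero_le _) (Finset.mem_univ i)
      rw [← w.2] at h1
      have h2 := le_T (w.1 i)
      have h3 := hc i
      calc w.1 i ≤ T (w.1 i) := h2
        _ ≤ c i * T (w.1 i) := Nat.le_mul_of_pos_left _ h3
        _ ≤ n := h1
    exact Finite.of_injective
      (fun w => (fun i => ⟨w.1 i, Nat.lt_succ_of_le (bound w i)⟩ : Fin k → Fin (n + 1)))
      (fun w w' hww' => Subtype.ext (funext fun i => by
        have := congrFun hww' i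
        simpa [Fin.mk.injEq] using this))
  let E : {z : Fin k → ℤ // ∑ i, (c i : ℝ) * ((z i : ℝ) - 1 / 2) ^ 2 ≤ R ^ 2} ≃
      (Fin k → Bool) × {w : Fin k → ℕ // ∑ i, c i * T (w i) ≤ N} :=
    { toFun := fun z => (fun i => decide (0 < z.1 i),
        ⟨fun i => np (z.1 i), (cond_iff z.1).mp z.2⟩)
      invFun := fun p => ⟨fun i => if p.1 i then (p.2.1 i : ℤ) + 1 else -(p.2.1 i : ℤ),
        (cond_iff _).mpr (by
          have hnp : ∀ i, np (if p.1 i then (p.2.1 i : ℤ) + 1 else -(p.2.1 i : ℤ)) = p.2.1 i := by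
            intro i
            split_ifs with hb
            · exact np_pos _
            · exact np_neg _
          simp only [hnp]
          exact p.2.2)⟩
      left_inv := fun z => Subtype.ext (funext fun i => by
        by_cases hz : 0 < z.1 i <;> simp [np, hz] <;> omega)
      right_inv := fun p => by
        refine Prod.ext (funext fun i => ?_) (Subtype.ext (funext fun i => ?_))
        · cases hb : p.1 i <;> simp [hb] <;> omega
        · simp only
          cases hb : p.1 i
          · simp only [hb, if_neg Bool.false_ne_true]; exact np_neg _
          · simp only [hb, if_pos rfl]; exact np_pos _ }
  let E2 : {w : Fin k → ℕ // ∑ i, c i * T (w i) ≤ N} ≃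
      (n : Fin (N + 1)) × {w : Fin k → ℕ // (n : ℕ) = ∑ i, c i * (w i * (w i + 1) / 2)} :=
    { toFun := fun w => ⟨⟨∑ i, c i * T (w.1 i), Nat.lt_succ_of_le w.2⟩, ⟨w.1, rfl⟩⟩
      invFun := fun p => ⟨p.2.1, by
        have := p.2.2
        have h1 : (∑ i, c i * T (p.2.1 i)) = (p.1 : ℕ) := this.symm
        rw [h1]; exact Nat.lt_succ_iff.mp p.1.isLt⟩
      left_inv := fun w => Subtype.ext rfl
      right_inv := fun p => by
        rcases p with ⟨⟨n, hn⟩, w, hw⟩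
        simp only [Fin.val_mk] at hw
        subst hw
        rfl }
  haveI : ∀ n : Fin (N + 1),
      Finite {w : Fin k → ℕ // (n : ℕ) = ∑ i, c i * (w i * (w i + 1) / 2)} := fun n => hfin n
  haveI F : ∀ n : ℕ,
      Fintype {w : Fin k → ℕ // n = ∑ i, c i * (w i * (w i + 1) / 2)} :=
    fun n => @Fintype.ofFinite _ (hfin n)
  rw [Nat.card_congr (E.trans (Equiv.prodCongrRight fun _ => E2))]
  rw [Nat.card_prod]
  have h1 : Nat.card (Fin k → Bool) = 2 ^ k := by
    simp [Nat.card_eq_fintype_card]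
  rw [h1]
  congr 1
  have h2 : Nat.card
      ((n : Fin (N + 1)) × {w : Fin k → ℕ // (n : ℕ) = ∑ i, c i * (w i * (w i + 1) / 2)})
      = ∑ n : Fin (N + 1),
        Nat.card {w : Fin k → ℕ // (n : ℕ) = ∑ i, c i * (w i * (w i + 1) / 2)} := by
    rw [Nat.card_eq_fintype_card, Fintype.card_sigma]
    exact Finset.sum_congr rfl fun n _ => (Nat.card_eq_fintype_card).symm
  rw [h2, Fin.sum_univ_eq_sum_range
    (fun m => Nat.card {w : Fin k → ℕ // m = ∑ i, c i * (w i * (w i + 1) / 2)})]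
end

section
/- For every positive integer n, the coefficient identity δ_4(n) = (1/4) · Σ_{a + 2b = n, a,b ≥ 0} r_2(a) · r_2(8b+2) holds, where δ_4 counts representations by four triangular numbers and r_2 counts representations as sums of two integer squares. -/
open Finset


lemma tri_term (z : ℕ) : (2*z+1)^2 = 8*(z*(z+1)/2)+1 := by
  have h : z*(z+1)/2*2 = z*(z+1) := Nat.div_mul_cancel (Nat.even_mul_succ_self z).two_dvd
  nlinarith [h]

lemma tri_sum (z : Fin 4 → ℕ) : (∑ i, (2 * z i + 1)^2) = 8 * (∑ i, z i * (z i+1)/2) + 4 := by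
  rw [Fin.sum_univ_four, Fin.sum_univ_four, tri_term, tri_term, tri_term, tri_term]
  ring

lemma L1 (n : ℕ) :
    Nat.card {w : Fin 4 → ℤ // (∀ i, Odd (w i)) ∧ ∑ i, (w i)^2 = 8*(n:ℤ)+4} =
    16 * Nat.card {z : Fin 4 → ℕ // n = ∑ i, z i * (z i + 1) / 2} := by
  have e1 : {w : Fin 4 → ℤ // (∀ i, Odd (w i)) ∧ ∑ i, (w i)^2 = 8*(n:ℤ)+4} ≃
      {q : Fin 4 → ℕ // (∑ i, (2 * q i + 1)^2) = 8*n+4} × (Fin 4 → Bool) := by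
    refine ⟨fun w => (⟨fun i => ((w.1 i).natAbs - 1)/2, ?_⟩, fun i => decide (0 < w.1 i)),
      fun p => ⟨fun i => if p.2 i then 2*(p.1.1 i)+1 else -(2*(p.1.1 i)+1), ?_, ?_⟩, ?_, ?_⟩
    · obtain ⟨w, hodd, hsum⟩ := w
      have hw : ∀ i, (w i)^2 = ((2 * (((w i).natAbs - 1)/2) + 1 : ℕ) : ℤ)^2 := by
        intro i
        have h1 : (w i) % 2 = 1 := Int.odd_iff.mp (hodd i)
        have h3 : (2 * (((w i).natAbs - 1)/2) + 1 : ℕ) = (w i).natAbs := by omega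
        rw [h3]
        exact_mod_cast (Int.natAbs_sq (w i)).symm
      have : ((∑ i, (2 * (((w i).natAbs - 1)/2) + 1)^2 : ℕ) : ℤ) = 8*n+4 := by
        push_cast
        rw [← hsum]
        exact (Finset.sum_congr rfl (fun i _ => (hw i).symm))
      exact_mod_cast this
    · intro i
      dsimp only
      split <;> [exact ⟨p.1.1 i, by ring⟩; exact ⟨-(p.1.1 i) - 1, by ring⟩]
    · have : (∑ i, (if p.2 i then (2*(p.1.1 i)+1 : ℤ) else -(2*(p.1.1 i)+1))^2) =
          ((∑ i, (2 * (p.1.1 i) + 1)^2 : ℕ) : ℤ) := by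
        push_cast
        refine Finset.sum_congr rfl (fun i _ => ?_)
        split <;> ring
      rw [this, p.1.2]
      push_cast; ring
    · rintro ⟨w, hodd, hsum⟩
      ext i
      · have h1 : (w i) % 2 = 1 := Int.odd_iff.mp (hodd i)
        dsimp only
        split <;> rename_i h <;> simp at h <;> push_cast <;> omega
    · rintro ⟨⟨q, hq⟩, s⟩
      have hpos : ∀ i, (0:ℤ) < 2*(q i)+1 := fun i => by positivity
      refine Prod.ext (Subtype.ext ?_) ?_
      · ext i
        dsimp only
        split <;> rename_i h <;> push_cast <;> omega
      · ext i
        dsimp only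
        split <;> rename_i h <;> simp [h, hpos i] <;> omega
  rw [Nat.card_congr e1, Nat.card_prod]
  have e2 : {q : Fin 4 → ℕ // (∑ i, (2 * q i + 1)^2) = 8*n+4} ≃
      {z : Fin 4 → ℕ // n = ∑ i, z i * (z i + 1) / 2} :=
    Equiv.subtypeEquivRight (fun z => by rw [tri_sum]; omega)
  rw [Nat.card_congr e2]
  simp [Nat.card_eq_fintype_card]
  ring


lemma L2 (n : ℕ) :
    Nat.card {w : Fin 4 → ℤ // (∀ i, Odd (w i)) ∧ ∑ i, (w i)^2 = 8*(n:ℤ)+4} =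
    Nat.card {w : Fin 4 → ℤ // Odd (w 0 + w 1) ∧ Odd (w 2 + w 3) ∧ ∑ i, (w i)^2 = 4*(n:ℤ)+2} := by
  refine Nat.card_congr ⟨fun w => ⟨![(w.1 0 + w.1 1)/2, (w.1 0 - w.1 1)/2, (w.1 2 + w.1 3)/2, (w.1 2 - w.1 3)/2], ?_, ?_, ?_⟩,
    fun w => ⟨![w.1 0 + w.1 1, w.1 0 - w.1 1, w.1 2 + w.1 3, w.1 2 - w.1 3], ?_, ?_⟩, ?_, ?_⟩
  · obtain ⟨w, hodd, hsum⟩ := w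
    have h0 := Int.odd_iff.mp (hodd 0); have h1 := Int.odd_iff.mp (hodd 1)
    simp only [Matrix.cons_val_zero, Matrix.cons_val_one, Matrix.head_cons]
    rw [Int.odd_iff]; omega
  · obtain ⟨w, hodd, hsum⟩ := w
    have h2 := Int.odd_iff.mp (hodd 2); have h3 := Int.odd_iff.mp (hodd 3)
    simp only [Matrix.cons_val_zero, Matrix.cons_val_one, Matrix.head_cons,
      Matrix.cons_val_two, Matrix.cons_val_three, Matrix.tail_cons]
    rw [Int.odd_iff]; omega
  · obtain ⟨w, hodd, hsum⟩ := w
    have h0 := Int.odd_iff.mp (hodd 0); have h1 := Int.odd_iff.mp (hodd 1)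
    have h2 := Int.odd_iff.mp (hodd 2); have h3 := Int.odd_iff.mp (hodd 3)
    rw [Fin.sum_univ_four] at hsum ⊢
    simp only [Matrix.cons_val_zero, Matrix.cons_val_one, Matrix.head_cons,
      Matrix.cons_val_two, Matrix.cons_val_three, Matrix.tail_cons]
    obtain ⟨a, ha⟩ : ∃ a, w 0 + w 1 = 2*a := ⟨(w 0 + w 1)/2, by omega⟩
    obtain ⟨b, hb⟩ : ∃ b, w 0 - w 1 = 2*b := ⟨(w 0 - w 1)/2, by omega⟩
    obtain ⟨c, hc⟩ : ∃ c, w 2 + w 3 = 2*c := ⟨(w 2 + w 3)/2, by omega⟩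
    obtain ⟨d, hd⟩ : ∃ d, w 2 - w 3 = 2*d := ⟨(w 2 - w 3)/2, by omega⟩
    have e0 : w 0 = a + b := by omega
    have e1 : w 1 = a - b := by omega
    have e2 : w 2 = c + d := by omega
    have e3 : w 3 = c - d := by omega
    have ea : (w 0 + w 1)/2 = a := by omega
    have eb : (w 0 - w 1)/2 = b := by omega
    have ec : (w 2 + w 3)/2 = c := by omega
    have ed : (w 2 - w 3)/2 = d := by omega
    rw [ea, eb, ec, ed]
    rw [e0, e1, e2, e3] at hsum
    have h2s : 2*(a^2+b^2+c^2+d^2) = 2*(4*(n:ℤ)+2) := by linear_combination hsum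
    linarith
  · obtain ⟨w, ho1, ho2, hsum⟩ := w
    intro i
    have g1 := Int.odd_iff.mp ho1; have g2 := Int.odd_iff.mp ho2
    fin_cases i <;> simp [Int.odd_iff] <;> omega
  · obtain ⟨w, ho1, ho2, hsum⟩ := w
    rw [Fin.sum_univ_four] at hsum ⊢
    simp only [Matrix.cons_val_zero, Matrix.cons_val_one, Matrix.head_cons,
      Matrix.cons_val_two, Matrix.cons_val_three, Matrix.tail_cons]
    linear_combination 2 * hsum
  · rintro ⟨w, hodd, hsum⟩
    have h0 := Int.odd_iff.mp (hodd 0); have h1 := Int.odd_iff.mp (hodd 1)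
    have h2 := Int.odd_iff.mp (hodd 2); have h3 := Int.odd_iff.mp (hodd 3)
    apply Subtype.ext
    funext i
    fin_cases i <;> simp <;> omega
  · rintro ⟨w, ho1, ho2, hsum⟩
    apply Subtype.ext
    funext i
    fin_cases i <;> simp <;> omega


lemma card_split {α : Type*} {P Q : α → Prop} [Finite {x // P x}] :
    Nat.card {x // P x} = Nat.card {x : α // P x ∧ Q x} + Nat.card {x : α // P x ∧ ¬ Q x} := by
  classical
  haveI : Finite {x : α // P x ∧ Q x} :=
    Finite.of_injective (fun x : {x : α // P x ∧ Q x} => (⟨x.1, x.2.1⟩ : {x // P x}))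
      (fun a b h => by apply Subtype.ext; simpa using congrArg Subtype.val h)
  haveI : Finite {x : α // P x ∧ ¬ Q x} :=
    Finite.of_injective (fun x : {x : α // P x ∧ ¬ Q x} => (⟨x.1, x.2.1⟩ : {x // P x}))
      (fun a b h => by apply Subtype.ext; simpa using congrArg Subtype.val h)
  rw [← Nat.card_sum]
  apply Nat.card_congr
  refine ⟨fun x => if h : Q x.1 then .inl ⟨x.1, x.2, h⟩ else .inr ⟨x.1, x.2, h⟩,
    Sum.elim (fun y => ⟨y.1, y.2.1⟩) (fun y => ⟨y.1, y.2.1⟩), ?_, ?_⟩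
  · intro x
    by_cases h : Q x.1
    · simp only [dif_pos h, Sum.elim_inl]
    · simp only [dif_neg h, Sum.elim_inr]
  · rintro (y | y)
    · simp [Sum.elim_inl, y.2.2]
    · simp [Sum.elim_inr, y.2.2]

lemma finite_sq (k : ℕ) (m : ℤ) : {x : Fin k → ℤ | m = ∑ i, (x i)^2}.Finite := by
  apply Set.Finite.subset (Set.Finite.pi (fun i : Fin k => Set.finite_Icc (-m) m))
  intro x hx
  simp only [Set.mem_setOf_eq] at hx
  intro i _
  have h1 : (x i)^2 ≤ m := by
    rw [hx]
    exact Finset.single_le_sum (f := fun j => (x j)^2) (fun j _ => sq_nonneg _) (Finset.mem_univ i)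
  constructor <;> nlinarith [sq_nonneg (x i)]

lemma finite_cond {k : ℕ} (m : ℤ) {P : (Fin k → ℤ) → Prop} (h : ∀ x, P x → m = ∑ i, (x i)^2) :
    Finite {x // P x} := by
  have : {x : Fin k → ℤ | P x} ⊆ {x | m = ∑ i, (x i)^2} := fun x hx => h x hx
  exact ((finite_sq k m).subset this).to_subtype

lemma sumsq_swap01 (w : Fin 4 → ℤ) : ∑ i, (![w 1, w 0, w 2, w 3] i)^2 = ∑ i, (w i)^2 := by
  simp [Fin.sum_univ_four]; ring

lemma sumsq_swap23 (w : Fin 4 → ℤ) : ∑ i, (![w 0, w 1, w 3, w 2] i)^2 = ∑ i, (w i)^2 := by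
  simp [Fin.sum_univ_four]; ring

lemma L3 (n : ℕ) :
    Nat.card {w : Fin 4 → ℤ // Odd (w 0 + w 1) ∧ Odd (w 2 + w 3) ∧ ∑ i, (w i)^2 = 4*(n:ℤ)+2} =
    4 * Nat.card {w : Fin 4 → ℤ // Even (w 0) ∧ Odd (w 1) ∧ Even (w 2) ∧ Odd (w 3) ∧
        ∑ i, (w i)^2 = 4*(n:ℤ)+2} := by
  haveI : Finite {w : Fin 4 → ℤ // Odd (w 0 + w 1) ∧ Odd (w 2 + w 3) ∧ ∑ i, (w i)^2 = 4*(n:ℤ)+2} :=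
    finite_cond (4*(n:ℤ)+2) (fun x hx => hx.2.2.symm)
  haveI : Finite {w : Fin 4 → ℤ // Even (w 0) ∧ Odd (w 1) ∧ Odd (w 2 + w 3) ∧ ∑ i, (w i)^2 = 4*(n:ℤ)+2} :=
    finite_cond (4*(n:ℤ)+2) (fun x hx => hx.2.2.2.symm)
  haveI : Finite {w : Fin 4 → ℤ // Even (w 0) ∧ Odd (w 1) ∧ Even (w 2) ∧ Odd (w 3) ∧ ∑ i, (w i)^2 = 4*(n:ℤ)+2} :=
    finite_cond (4*(n:ℤ)+2) (fun x hx => hx.2.2.2.2.symm)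
  have e1 : {w : Fin 4 → ℤ // (Odd (w 0 + w 1) ∧ Odd (w 2 + w 3) ∧ ∑ i, (w i)^2 = 4*(n:ℤ)+2) ∧ Even (w 0)} ≃
      {w : Fin 4 → ℤ // Even (w 0) ∧ Odd (w 1) ∧ Odd (w 2 + w 3) ∧ ∑ i, (w i)^2 = 4*(n:ℤ)+2} := by
    apply Equiv.subtypeEquivRight
    intro w
    constructor
    · rintro ⟨⟨h1, h2, h3⟩, h4⟩
      have a1 := Int.odd_iff.mp h1; have a4 := Int.even_iff.mp h4
      exact ⟨h4, Int.odd_iff.mpr (by omega), h2, h3⟩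
    · rintro ⟨h1, h2, h3, h4⟩
      have a1 := Int.even_iff.mp h1; have a2 := Int.odd_iff.mp h2
      exact ⟨⟨Int.odd_iff.mpr (by omega), h3, h4⟩, h1⟩
  have e2 : {w : Fin 4 → ℤ // (Odd (w 0 + w 1) ∧ Odd (w 2 + w 3) ∧ ∑ i, (w i)^2 = 4*(n:ℤ)+2) ∧ ¬ Even (w 0)} ≃
      {w : Fin 4 → ℤ // Even (w 0) ∧ Odd (w 1) ∧ Odd (w 2 + w 3) ∧ ∑ i, (w i)^2 = 4*(n:ℤ)+2} := by
    have F : ∀ w : Fin 4 → ℤ,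
        ((Odd (w 0 + w 1) ∧ Odd (w 2 + w 3) ∧ ∑ i, (w i)^2 = 4*(n:ℤ)+2) ∧ ¬ Even (w 0)) →
        (Even (![w 1, w 0, w 2, w 3] 0) ∧ Odd (![w 1, w 0, w 2, w 3] 1) ∧
         Odd (![w 1, w 0, w 2, w 3] 2 + ![w 1, w 0, w 2, w 3] 3) ∧
         ∑ i, (![w 1, w 0, w 2, w 3] i)^2 = 4*(n:ℤ)+2) := by
      rintro w ⟨⟨h1, h2, h3⟩, h4⟩
      have a1 := Int.odd_iff.mp h1
      have a4 := Int.not_even_iff.mp h4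
      refine ⟨?_, ?_, ?_, ?_⟩
      · simp only [Matrix.cons_val_zero]
        exact Int.even_iff.mpr (by omega)
      · simp only [Matrix.cons_val_one, Matrix.head_cons, Matrix.cons_val_zero]
        exact Int.odd_iff.mpr (by omega)
      · simpa using h2
      · rw [sumsq_swap01]; exact h3
    have G : ∀ w : Fin 4 → ℤ,
        (Even (w 0) ∧ Odd (w 1) ∧ Odd (w 2 + w 3) ∧ ∑ i, (w i)^2 = 4*(n:ℤ)+2) →
        ((Odd (![w 1, w 0, w 2, w 3] 0 + ![w 1, w 0, w 2, w 3] 1) ∧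
          Odd (![w 1, w 0, w 2, w 3] 2 + ![w 1, w 0, w 2, w 3] 3) ∧
          ∑ i, (![w 1, w 0, w 2, w 3] i)^2 = 4*(n:ℤ)+2) ∧ ¬ Even (![w 1, w 0, w 2, w 3] 0)) := by
      rintro w ⟨h1, h2, h3, h4⟩
      have a1 := Int.even_iff.mp h1; have a2 := Int.odd_iff.mp h2
      refine ⟨⟨?_, ?_, ?_⟩, ?_⟩
      · simp only [Matrix.cons_val_zero, Matrix.cons_val_one, Matrix.head_cons]
        exact Int.odd_iff.mpr (by omega)
      · simpa using h3
      · rw [sumsq_swap01]; exact h4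
      · simp only [Matrix.cons_val_zero]
        exact Int.not_even_iff.mpr (by omega)
    refine ⟨fun w => ⟨_, F w.1 w.2⟩, fun w => ⟨_, G w.1 w.2⟩, ?_, ?_⟩
    · rintro ⟨w, h⟩
      apply Subtype.ext
      funext i
      fin_cases i <;> simp
    · rintro ⟨w, h⟩
      apply Subtype.ext
      funext i
      fin_cases i <;> simp
  have f1 : {w : Fin 4 → ℤ // (Even (w 0) ∧ Odd (w 1) ∧ Odd (w 2 + w 3) ∧ ∑ i, (w i)^2 = 4*(n:ℤ)+2) ∧ Even (w 2)} ≃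
      {w : Fin 4 → ℤ // Even (w 0) ∧ Odd (w 1) ∧ Even (w 2) ∧ Odd (w 3) ∧ ∑ i, (w i)^2 = 4*(n:ℤ)+2} := by
    apply Equiv.subtypeEquivRight
    intro w
    constructor
    · rintro ⟨⟨h1, h2, h3, h4⟩, h5⟩
      have a3 := Int.odd_iff.mp h3; have a5 := Int.even_iff.mp h5
      exact ⟨h1, h2, h5, Int.odd_iff.mpr (by omega), h4⟩
    · rintro ⟨h1, h2, h3, h4, h5⟩
      have a3 := Int.even_iff.mp h3; have a4 := Int.odd_iff.mp h4
      exact ⟨⟨h1, h2, Int.odd_iff.mpr (by omega), h5⟩, h3⟩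
  have f2 : {w : Fin 4 → ℤ // (Even (w 0) ∧ Odd (w 1) ∧ Odd (w 2 + w 3) ∧ ∑ i, (w i)^2 = 4*(n:ℤ)+2) ∧ ¬ Even (w 2)} ≃
      {w : Fin 4 → ℤ // Even (w 0) ∧ Odd (w 1) ∧ Even (w 2) ∧ Odd (w 3) ∧ ∑ i, (w i)^2 = 4*(n:ℤ)+2} := by
    have F : ∀ w : Fin 4 → ℤ,
        ((Even (w 0) ∧ Odd (w 1) ∧ Odd (w 2 + w 3) ∧ ∑ i, (w i)^2 = 4*(n:ℤ)+2) ∧ ¬ Even (w 2)) →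
        (Even (![w 0, w 1, w 3, w 2] 0) ∧ Odd (![w 0, w 1, w 3, w 2] 1) ∧
         Even (![w 0, w 1, w 3, w 2] 2) ∧ Odd (![w 0, w 1, w 3, w 2] 3) ∧
         ∑ i, (![w 0, w 1, w 3, w 2] i)^2 = 4*(n:ℤ)+2) := by
      rintro w ⟨⟨h1, h2, h3, h4⟩, h5⟩
      have a3 := Int.odd_iff.mp h3
      have a5 := Int.not_even_iff.mp h5
      refine ⟨by simpa using h1, by simpa using h2, ?_, ?_, ?_⟩
      · show Even (w 3)
        exact Int.even_iff.mpr (by omega)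
      · show Odd (w 2)
        exact Int.odd_iff.mpr (by omega)
      · rw [sumsq_swap23]; exact h4
    have G : ∀ w : Fin 4 → ℤ,
        (Even (w 0) ∧ Odd (w 1) ∧ Even (w 2) ∧ Odd (w 3) ∧ ∑ i, (w i)^2 = 4*(n:ℤ)+2) →
        ((Even (![w 0, w 1, w 3, w 2] 0) ∧ Odd (![w 0, w 1, w 3, w 2] 1) ∧
          Odd (![w 0, w 1, w 3, w 2] 2 + ![w 0, w 1, w 3, w 2] 3) ∧
          ∑ i, (![w 0, w 1, w 3, w 2] i)^2 = 4*(n:ℤ)+2) ∧ ¬ Even (![w 0, w 1, w 3, w 2] 2)) := by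
      rintro w ⟨h1, h2, h3, h4, h5⟩
      have a3 := Int.even_iff.mp h3; have a4 := Int.odd_iff.mp h4
      refine ⟨⟨by simpa using h1, by simpa using h2, ?_, ?_⟩, ?_⟩
      · show Odd (w 3 + w 2)
        exact Int.odd_iff.mpr (by omega)
      · rw [sumsq_swap23]; exact h5
      · show ¬ Even (w 3)
        exact Int.not_even_iff.mpr (by omega)
    refine ⟨fun w => ⟨_, F w.1 w.2⟩, fun w => ⟨_, G w.1 w.2⟩, ?_, ?_⟩
    · rintro ⟨w, h⟩
      apply Subtype.ext
      funext i
      fin_cases i <;> simp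
    · rintro ⟨w, h⟩
      apply Subtype.ext
      funext i
      fin_cases i <;> simp
  have step1 : Nat.card {w : Fin 4 → ℤ // Odd (w 0 + w 1) ∧ Odd (w 2 + w 3) ∧ ∑ i, (w i)^2 = 4*(n:ℤ)+2} =
      Nat.card {w : Fin 4 → ℤ // (Odd (w 0 + w 1) ∧ Odd (w 2 + w 3) ∧ ∑ i, (w i)^2 = 4*(n:ℤ)+2) ∧ Even (w 0)} +
      Nat.card {w : Fin 4 → ℤ // (Odd (w 0 + w 1) ∧ Odd (w 2 + w 3) ∧ ∑ i, (w i)^2 = 4*(n:ℤ)+2) ∧ ¬ Even (w 0)} :=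
    card_split
  rw [Nat.card_congr e1, Nat.card_congr e2] at step1
  have step2 : Nat.card {w : Fin 4 → ℤ // Even (w 0) ∧ Odd (w 1) ∧ Odd (w 2 + w 3) ∧ ∑ i, (w i)^2 = 4*(n:ℤ)+2} =
      Nat.card {w : Fin 4 → ℤ // (Even (w 0) ∧ Odd (w 1) ∧ Odd (w 2 + w 3) ∧ ∑ i, (w i)^2 = 4*(n:ℤ)+2) ∧ Even (w 2)} +
      Nat.card {w : Fin 4 → ℤ // (Even (w 0) ∧ Odd (w 1) ∧ Odd (w 2 + w 3) ∧ ∑ i, (w i)^2 = 4*(n:ℤ)+2) ∧ ¬ Even (w 2)} :=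
    card_split
  rw [Nat.card_congr f1, Nat.card_congr f2] at step2
  rw [step1, step2]
  ring


def key_s10 (w : Fin 4 → ℤ) : ℕ × ℕ :=
  ((((w 0)^2 + (w 2)^2)/4).toNat, (((w 1)^2 + (w 3)^2 - 2)/8).toNat)

lemma key1_spec (w : Fin 4 → ℤ) (h0 : Even (w 0)) (h2 : Even (w 2)) :
    4 * ((key_s10 w).1 : ℤ) = (w 0)^2 + (w 2)^2 := by
  obtain ⟨u, hu⟩ := h0
  obtain ⟨v, hv⟩ := h2
  have e : (w 0)^2 + (w 2)^2 = 4*(u^2+v^2) := by rw [hu, hv]; ring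
  have e2 : ((w 0)^2 + (w 2)^2)/4 = u^2+v^2 := by
    rw [e]; exact Int.mul_ediv_cancel_left _ (by norm_num)
  unfold key_s10
  dsimp only
  rw [e2, Int.toNat_of_nonneg (by positivity), e]

lemma key2_spec (w : Fin 4 → ℤ) (h1 : Odd (w 1)) (h3 : Odd (w 3)) :
    8 * ((key_s10 w).2 : ℤ) + 2 = (w 1)^2 + (w 3)^2 := by
  obtain ⟨k, hk⟩ := h1
  obtain ⟨l, hl⟩ := h3
  obtain ⟨c, hc⟩ := Int.even_mul_succ_self k
  obtain ⟨d, hd⟩ := Int.even_mul_succ_self l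
  have e : (w 1)^2 + (w 3)^2 - 2 = 8*(c+d) := by
    rw [hk, hl]; linear_combination 4*hc + 4*hd
  have e2 : ((w 1)^2 + (w 3)^2 - 2)/8 = c+d := by
    rw [e]; exact Int.mul_ediv_cancel_left _ (by norm_num)
  have hnn : (0:ℤ) ≤ c + d := by
    obtain ⟨A, hA⟩ : ∃ A, A = (w 1)^2 := ⟨_, rfl⟩
    obtain ⟨B, hB⟩ : ∃ B, B = (w 3)^2 := ⟨_, rfl⟩
    have hA0 : 0 ≤ A := hA ▸ sq_nonneg _
    have hB0 : 0 ≤ B := hB ▸ sq_nonneg _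
    have e' : A + B - 2 = 8*(c+d) := by rw [hA, hB]; exact e
    omega
  unfold key_s10
  dsimp only
  rw [e2, Int.toNat_of_nonneg hnn]
  linarith [e]

lemma odd_odd_of_sq_sum {a b : ℤ} {m : ℤ} (h : a^2 + b^2 = 4*m+2) : Odd a ∧ Odd b := by
  rcases Int.even_or_odd a with ⟨k, hk⟩ | ⟨k, hk⟩ <;>
    rcases Int.even_or_odd b with ⟨l, hl⟩ | ⟨l, hl⟩
  · exfalso
    obtain ⟨K, hK⟩ : ∃ K, K = k^2 + l^2 := ⟨_, rfl⟩
    have : 4*K = 4*m+2 := by rw [hK]; rw [hk, hl] at h; linarith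
    omega
  · exfalso
    obtain ⟨K, hK⟩ : ∃ K, K = k^2 + l^2 + l := ⟨_, rfl⟩
    have : 4*K + 1 = 4*m+2 := by rw [hK]; rw [hk, hl] at h; linarith
    omega
  · exfalso
    obtain ⟨K, hK⟩ : ∃ K, K = k^2 + k + l^2 := ⟨_, rfl⟩
    have : 4*K + 1 = 4*m+2 := by rw [hK]; rw [hk, hl] at h; linarith
    omega
  · exact ⟨⟨k, hk⟩, ⟨l, hl⟩⟩

lemma fiber_card (n : ℕ) (p : ℕ × ℕ) (hp : p.1 + 2*p.2 = n) :
    Nat.card {w : Fin 4 → ℤ // (Even (w 0) ∧ Odd (w 1) ∧ Even (w 2) ∧ Odd (w 3) ∧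
        ∑ i, (w i)^2 = 4*(n:ℤ)+2) ∧ key_s10 w = p} =
    Nat.card {x : Fin 2 → ℤ // (p.1 : ℤ) = ∑ i, (x i)^2} *
    Nat.card {x : Fin 2 → ℤ // ((8 * p.2 + 2 : ℕ) : ℤ) = ∑ i, (x i)^2} := by
  rw [← Nat.card_prod]
  have hpz : (p.1 : ℤ) + 2*(p.2:ℤ) = n := by exact_mod_cast hp
  have F1 : ∀ w : Fin 4 → ℤ, ((Even (w 0) ∧ Odd (w 1) ∧ Even (w 2) ∧ Odd (w 3) ∧
      ∑ i, (w i)^2 = 4*(n:ℤ)+2) ∧ key_s10 w = p) →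
      (p.1 : ℤ) = ∑ i, ((![w 0 / 2, w 2 / 2] : Fin 2 → ℤ) i)^2 := by
    rintro w ⟨⟨h0, h1, h2, h3, hs⟩, hkey⟩
    have k1 := key1_spec w h0 h2
    rw [hkey] at k1
    obtain ⟨u, hu⟩ := h0
    obtain ⟨v, hv⟩ := h2
    have eu : w 0 / 2 = u := by omega
    have ev : w 2 / 2 = v := by omega
    rw [Fin.sum_univ_two]
    simp only [Matrix.cons_val_zero, Matrix.cons_val_one, Matrix.head_cons]
    rw [eu, ev]
    rw [hu, hv] at k1
    have : 4*(p.1:ℤ) = 4*(u^2+v^2) := by linear_combination k1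
    linarith
  have F2 : ∀ w : Fin 4 → ℤ, ((Even (w 0) ∧ Odd (w 1) ∧ Even (w 2) ∧ Odd (w 3) ∧
      ∑ i, (w i)^2 = 4*(n:ℤ)+2) ∧ key_s10 w = p) →
      ((8 * p.2 + 2 : ℕ) : ℤ) = ∑ i, ((![w 1, w 3] : Fin 2 → ℤ) i)^2 := by
    rintro w ⟨⟨h0, h1, h2, h3, hs⟩, hkey⟩
    have k2 := key2_spec w h1 h3
    rw [hkey] at k2
    rw [Fin.sum_univ_two]
    simp only [Matrix.cons_val_zero, Matrix.cons_val_one, Matrix.head_cons]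
    push_cast
    linarith
  have G : ∀ x y : Fin 2 → ℤ, ((p.1 : ℤ) = ∑ i, (x i)^2) →
      (((8 * p.2 + 2 : ℕ) : ℤ) = ∑ i, (y i)^2) →
      ((Even ((![2 * x 0, y 0, 2 * x 1, y 1] : Fin 4 → ℤ) 0) ∧
        Odd ((![2 * x 0, y 0, 2 * x 1, y 1] : Fin 4 → ℤ) 1) ∧
        Even ((![2 * x 0, y 0, 2 * x 1, y 1] : Fin 4 → ℤ) 2) ∧
        Odd ((![2 * x 0, y 0, 2 * x 1, y 1] : Fin 4 → ℤ) 3) ∧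
        ∑ i, ((![2 * x 0, y 0, 2 * x 1, y 1] : Fin 4 → ℤ) i)^2 = 4*(n:ℤ)+2) ∧
        key_s10 (![2 * x 0, y 0, 2 * x 1, y 1] : Fin 4 → ℤ) = p) := by
    intro x y hx hy
    rw [Fin.sum_univ_two] at hx hy
    have hy' : 8 * (p.2:ℤ) + 2 = (y 0)^2 + (y 1)^2 := by push_cast at hy; linarith
    have hodd : Odd (y 0) ∧ Odd (y 1) :=
      odd_odd_of_sq_sum (m := 2*(p.2:ℤ)) (by linarith)
    refine ⟨⟨?_, ?_, ?_, ?_, ?_⟩, ?_⟩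
    · show Even (2 * x 0)
      exact ⟨x 0, by ring⟩
    · show Odd (y 0)
      exact hodd.1
    · show Even (2 * x 1)
      exact ⟨x 1, by ring⟩
    · show Odd (y 1)
      exact hodd.2
    · rw [Fin.sum_univ_four]
      simp only [Matrix.cons_val_zero, Matrix.cons_val_one, Matrix.head_cons,
        Matrix.cons_val_two, Matrix.cons_val_three, Matrix.tail_cons]
      linear_combination (-4)*hx - hy' + 4*hpz
    · have c1 : ((2 * x 0)^2 + (2 * x 1)^2) / 4 = (p.1:ℤ) := by
        have e : (2 * x 0)^2 + (2 * x 1)^2 = 4*((x 0)^2 + (x 1)^2) := by ring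
        rw [e, Int.mul_ediv_cancel_left _ (by norm_num), ← hx]
      have c2 : ((y 0)^2 + (y 1)^2 - 2) / 8 = (p.2:ℤ) := by
        have e : (y 0)^2 + (y 1)^2 - 2 = 8*(p.2:ℤ) := by linarith
        rw [e, Int.mul_ediv_cancel_left _ (by norm_num)]
      unfold key_s10
      simp only [Matrix.cons_val_zero, Matrix.cons_val_one, Matrix.head_cons,
        Matrix.cons_val_two, Matrix.cons_val_three, Matrix.tail_cons]
      rw [c1, c2]
      simp
  refine Nat.card_congr
    ⟨fun w => (⟨![w.1 0 / 2, w.1 2 / 2], F1 w.1 w.2⟩, ⟨![w.1 1, w.1 3], F2 w.1 w.2⟩),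
     fun q => ⟨![2 * q.1.1 0, q.2.1 0, 2 * q.1.1 1, q.2.1 1], G q.1.1 q.2.1 q.1.2 q.2.2⟩,
     ?_, ?_⟩
  · rintro ⟨w, ⟨h0, h1, h2, h3, hs⟩, hkey⟩
    have a0 := Int.even_iff.mp h0
    have a2 := Int.even_iff.mp h2
    apply Subtype.ext
    funext i
    fin_cases i <;> simp <;> omega
  · rintro ⟨⟨x, hx⟩, ⟨y, hy⟩⟩
    refine Prod.ext (Subtype.ext ?_) (Subtype.ext ?_) <;>
      · funext i
        fin_cases i <;> simp <;> omega

lemma L4 (n : ℕ) :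
    Nat.card {w : Fin 4 → ℤ // Even (w 0) ∧ Odd (w 1) ∧ Even (w 2) ∧ Odd (w 3) ∧
        ∑ i, (w i)^2 = 4*(n:ℤ)+2} =
    ∑ p ∈ (Finset.range (n + 1) ×ˢ Finset.range (n + 1)).filter
        (fun p => p.1 + 2 * p.2 = n),
      Nat.card {x : Fin 2 → ℤ // (p.1 : ℤ) = ∑ i, (x i) ^ 2} *
      Nat.card {x : Fin 2 → ℤ // ((8 * p.2 + 2 : ℕ) : ℤ) = ∑ i, (x i) ^ 2} := by
  classical
  have hfin : {w : Fin 4 → ℤ | Even (w 0) ∧ Odd (w 1) ∧ Even (w 2) ∧ Odd (w 3) ∧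
      ∑ i, (w i)^2 = 4*(n:ℤ)+2}.Finite :=
    (finite_sq 4 (4*(n:ℤ)+2)).subset (fun x hx => hx.2.2.2.2.symm)
  have h1 : Nat.card {w : Fin 4 → ℤ // Even (w 0) ∧ Odd (w 1) ∧ Even (w 2) ∧ Odd (w 3) ∧
      ∑ i, (w i)^2 = 4*(n:ℤ)+2} = hfin.toFinset.card := by
    rw [← Set.ncard_eq_toFinset_card _ hfin]
    exact Nat.card_coe_set_eq _
  rw [h1]
  have hmem : ∀ w ∈ hfin.toFinset, key_s10 w ∈ (Finset.range (n + 1) ×ˢ Finset.range (n + 1)).filter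
      (fun p => p.1 + 2 * p.2 = n) := by
    intro w hw
    rw [Set.Finite.mem_toFinset] at hw
    obtain ⟨h0, ho1, h2, ho3, hs⟩ := hw
    clear h1 hfin
    have k1 := key1_spec w h0 h2
    have k2 := key2_spec w ho1 ho3
    rw [Fin.sum_univ_four] at hs
    have hz : 4*((key_s10 w).1 : ℤ) + (8*((key_s10 w).2 : ℤ) + 2) = 4*(n:ℤ)+2 := by linarith
    have hn : (key_s10 w).1 + 2 * (key_s10 w).2 = n := by omega
    simp only [Finset.mem_filter, Finset.mem_product, Finset.mem_range]
    omega
  rw [Finset.card_eq_sum_card_fiberwise hmem]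
  apply Finset.sum_congr rfl
  intro p hp
  have hp' : p.1 + 2*p.2 = n := (Finset.mem_filter.mp hp).2
  have h2 : (hfin.toFinset.filter (fun w => key_s10 w = p)).card =
      Nat.card {w : Fin 4 → ℤ // (Even (w 0) ∧ Odd (w 1) ∧ Even (w 2) ∧ Odd (w 3) ∧
        ∑ i, (w i)^2 = 4*(n:ℤ)+2) ∧ key_s10 w = p} := by
    rw [← Nat.card_eq_finsetCard]
    apply Nat.card_congr
    apply Equiv.subtypeEquivRight
    intro w
    simp [Set.Finite.mem_toFinset, and_assoc]
  rw [h2, fiber_card n p hp']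

theorem stmt10 (n : ℕ) (hn : 0 < n) :
    4 * Nat.card {z : Fin 4 → ℕ // n = ∑ i, z i * (z i + 1) / 2} =
      ∑ p ∈ (Finset.range (n + 1) ×ˢ Finset.range (n + 1)).filter
          (fun p => p.1 + 2 * p.2 = n),
        Nat.card {x : Fin 2 → ℤ // (p.1 : ℤ) = ∑ i, (x i) ^ 2} *
        Nat.card {x : Fin 2 → ℤ // ((8 * p.2 + 2 : ℕ) : ℤ) = ∑ i, (x i) ^ 2} := by
  have l1 := L1 n
  rw [L2 n, L3 n, L4 n] at l1
  linarith
end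

section
/- For every positive integer n, with coefficient tuple C² = (c_1,...,c_k,c_1,...,c_k) and h = c_1+...+c_k: q_{2k}(C²; 8n+2h) = Σ_{a + 2b = n, a,b ≥ 0} r_k(C;a) · q_k(C; 8b+h). -/
namespace S19

/-- Coordinate bijection: (x, w) with w odd positive ↔ (y, z) both odd positive,
    via y = |w+2x|, z = |w-2x|. -/
def e : {p : ℤ × ℤ // Odd p.2 ∧ 0 < p.2} ≃
    {p : ℤ × ℤ // (Odd p.1 ∧ 0 < p.1) ∧ (Odd p.2 ∧ 0 < p.2)} where
  toFun s := ⟨(|s.1.2 + 2 * s.1.1|, |s.1.2 - 2 * s.1.1|), by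
    obtain ⟨⟨x, w⟩, hw⟩ := s
    simp only [Int.odd_iff] at hw ⊢
    simp only [Int.abs_eq_natAbs]
    omega⟩
  invFun t :=
    ⟨if (t.1.1 + t.1.2) % 4 = 2 then ((t.1.1 - t.1.2) / 4, (t.1.1 + t.1.2) / 2)
     else (if t.1.2 < t.1.1 then (t.1.1 + t.1.2) / 4 else -((t.1.1 + t.1.2) / 4),
           |t.1.1 - t.1.2| / 2), by
    obtain ⟨⟨y, z⟩, hy, hz⟩ := t
    simp only [Int.odd_iff] at hy hz ⊢
    simp only [Int.abs_eq_natAbs]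
    split_ifs <;> simp only [Int.odd_iff] <;> omega⟩
  left_inv s := by
    obtain ⟨⟨x, w⟩, hw⟩ := s
    simp only [Int.odd_iff] at hw
    apply Subtype.ext
    simp only [Int.abs_eq_natAbs]
    split_ifs with h1 h2 <;> refine Prod.ext ?_ ?_ <;> simp only [] <;> omega
  right_inv t := by
    obtain ⟨⟨y, z⟩, hy, hz⟩ := t
    simp only [Int.odd_iff] at hy hz
    apply Subtype.ext
    simp only [Int.abs_eq_natAbs]
    split_ifs with h1 h2 <;> refine Prod.ext ?_ ?_ <;> simp only [] <;> omega

abbrev A := {p : ℤ × ℤ // Odd p.2 ∧ 0 < p.2}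

variable {k : ℕ} (c : Fin k → ℕ) (n : ℕ)

/-- The first equivalence: odd representations of `8n+2h` by the doubled form
    correspond to pairs of odd positive integer vectors (as pairs of integers). -/
def equiv1 :
    {y : Fin k ⊕ Fin k → ℕ // (∀ i, Odd (y i) ∧ 0 < y i) ∧
        8 * n + 2 * ∑ i, c i = ∑ i, Sum.elim c c i * (y i) ^ 2} ≃
    {f : Fin k → {p : ℤ × ℤ // (Odd p.1 ∧ 0 < p.1) ∧ (Odd p.2 ∧ 0 < p.2)} //
        8 * (n : ℤ) + 2 * ∑ i, (c i : ℤ) =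
          ∑ i, (c i : ℤ) * (((f i).1.1) ^ 2 + ((f i).1.2) ^ 2)} where
  toFun y := ⟨fun i => ⟨((y.1 (.inl i) : ℤ), (y.1 (.inr i) : ℤ)), by
      have h1 := y.2.1 (.inl i)
      have h2 := y.2.1 (.inr i)
      exact ⟨⟨Int.odd_coe_nat _ |>.mpr h1.1, Int.natCast_pos.mpr h1.2⟩,
             ⟨Int.odd_coe_nat _ |>.mpr h2.1, Int.natCast_pos.mpr h2.2⟩⟩⟩, by
    have hy := y.2.2
    rw [Fintype.sum_sum_type] at hy
    simp only [Sum.elim_inl, Sum.elim_inr] at hy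
    have key : ((8 * n + 2 * ∑ i, c i : ℕ) : ℤ) =
        ((∑ i, c i * (y.1 (.inl i)) ^ 2 + ∑ i, c i * (y.1 (.inr i)) ^ 2 : ℕ) : ℤ) := by
      exact congrArg (fun t : ℕ => (t : ℤ)) hy
    push_cast at key
    simp only []
    rw [key, ← Finset.sum_add_distrib]
    exact Finset.sum_congr rfl fun i _ => by ring⟩
  invFun f := ⟨Sum.elim (fun i => (f.1 i).1.1.toNat) (fun i => (f.1 i).1.2.toNat), by
    constructor
    · rintro (i | i)
      · have h := (f.1 i).2.1
        rw [Int.odd_iff] at h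
        simp only [Sum.elim_inl, Nat.odd_iff]
        omega
      · have h := (f.1 i).2.2
        rw [Int.odd_iff] at h
        simp only [Sum.elim_inr, Nat.odd_iff]
        omega
    · rw [Fintype.sum_sum_type]
      simp only [Sum.elim_inl, Sum.elim_inr]
      have k1 : ∀ i, (((f.1 i).1.1.toNat : ℤ)) = (f.1 i).1.1 :=
        fun i => Int.toNat_of_nonneg (f.1 i).2.1.2.le
      have k2 : ∀ i, (((f.1 i).1.2.toNat : ℤ)) = (f.1 i).1.2 :=
        fun i => Int.toNat_of_nonneg (f.1 i).2.2.2.le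
      have := f.2
      apply @Nat.cast_injective ℤ
      push_cast
      simp only [k1, k2]
      refine this.trans ?_
      rw [← Finset.sum_add_distrib]
      exact Finset.sum_congr rfl fun i _ => by ring⟩
  left_inv y := by
    apply Subtype.ext
    funext i
    rcases i with i | i <;> simp
  right_inv f := by
    apply Subtype.ext
    funext i
    apply Subtype.ext
    refine Prod.ext ?_ ?_ <;> simp only [Sum.elim_inl, Sum.elim_inr]
    · exact Int.toNat_of_nonneg (f.1 i).2.1.2.le
    · exact Int.toNat_of_nonneg (f.1 i).2.2.2.le

/-- The second equivalence: the coordinatewise change of variables. -/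
def equiv2 :
    {g : Fin k → A // 8 * (n : ℤ) + 2 * ∑ i, (c i : ℤ) =
          ∑ i, (c i : ℤ) * (2 * ((g i).1.2) ^ 2 + 8 * ((g i).1.1) ^ 2)} ≃
    {f : Fin k → {p : ℤ × ℤ // (Odd p.1 ∧ 0 < p.1) ∧ (Odd p.2 ∧ 0 < p.2)} //
        8 * (n : ℤ) + 2 * ∑ i, (c i : ℤ) =
          ∑ i, (c i : ℤ) * (((f i).1.1) ^ 2 + ((f i).1.2) ^ 2)} :=
  Equiv.subtypeEquiv (Equiv.piCongrRight fun _ => e) (by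
    intro g
    simp only [Equiv.piCongrRight_apply, Pi.map_apply]
    have : ∀ i : Fin k, ((e (g i)).1.1) ^ 2 + ((e (g i)).1.2) ^ 2 =
        2 * ((g i).1.2) ^ 2 + 8 * ((g i).1.1) ^ 2 := by
      intro i
      obtain ⟨⟨x, w⟩, hw⟩ := g i
      show |w + 2 * x| ^ 2 + |w - 2 * x| ^ 2 = _
      rw [sq_abs, sq_abs]; ring
    simp only [this])

def aVal (g : Fin k → A) : ℕ := (∑ i, (c i : ℤ) * ((g i).1.1) ^ 2).toNat
def bVal (g : Fin k → A) : ℕ := (n - aVal c g) / 2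

lemma odd_sq_sub_one (w : ℤ) (hw : Odd w) : (8 : ℤ) ∣ w ^ 2 - 1 := by
  obtain ⟨t, ht⟩ := hw
  obtain ⟨r, hr⟩ := Int.even_mul_succ_self t
  refine ⟨r, ?_⟩
  subst ht
  nlinarith [hr]

lemma key (g : Fin k → A)
    (hg : 8 * (n : ℤ) + 2 * ∑ i, (c i : ℤ) =
      ∑ i, (c i : ℤ) * (2 * ((g i).1.2) ^ 2 + 8 * ((g i).1.1) ^ 2)) :
    ((aVal c g : ℤ) = ∑ i, (c i : ℤ) * ((g i).1.1) ^ 2) ∧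
    aVal c g + 2 * bVal c n g = n ∧
    (8 * (bVal c n g : ℤ) + ∑ i, (c i : ℤ) = ∑ i, (c i : ℤ) * ((g i).1.2) ^ 2) := by
  set SX := ∑ i, (c i : ℤ) * ((g i).1.1) ^ 2 with hSX
  set SW := ∑ i, (c i : ℤ) * ((g i).1.2) ^ 2 with hSW
  have hsum : 8 * (n : ℤ) + 2 * ∑ i, (c i : ℤ) = 2 * SW + 8 * SX := by
    rw [hg, hSW, hSX, Finset.mul_sum, Finset.mul_sum, ← Finset.sum_add_distrib]
    exact Finset.sum_congr rfl fun i _ => by ring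
  have hSX0 : 0 ≤ SX := Finset.sum_nonneg fun i _ => by positivity
  have hSWH : (∑ i, (c i : ℤ)) ≤ SW := by
    refine Finset.sum_le_sum fun i _ => ?_
    have h1 : (1 : ℤ) ≤ ((g i).1.2) ^ 2 := by
      have := (g i).2.2
      nlinarith
    nlinarith [Int.natCast_nonneg (c i)]
  have hdvd : (8 : ℤ) ∣ SW - ∑ i, (c i : ℤ) := by
    have : SW - ∑ i, (c i : ℤ) = ∑ i, (c i : ℤ) * (((g i).1.2) ^ 2 - 1) := by
      rw [hSW, ← Finset.sum_sub_distrib]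
      exact Finset.sum_congr rfl fun i _ => by ring
    rw [this]
    exact Finset.dvd_sum fun i _ => (odd_sq_sub_one _ (g i).2.1).mul_left _
  have haN : (aVal c g : ℤ) = SX := Int.toNat_of_nonneg hSX0
  have hbN : bVal c n g = (n - aVal c g) / 2 := rfl
  refine ⟨haN, ?_, ?_⟩ <;> omega

def F : Finset (ℕ × ℕ) :=
  (Finset.range (n + 1) ×ˢ Finset.range (n + 1)).filter (fun p => p.1 + 2 * p.2 = n)

lemma mem_F {p : ℕ × ℕ} : p ∈ F n ↔ p.1 + 2 * p.2 = n := by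
  simp only [F, Finset.mem_filter, Finset.mem_product, Finset.mem_range]
  omega

/-- The third equivalence: splitting according to the value `(a, b)`. -/
def equiv3 :
    {g : Fin k → A // 8 * (n : ℤ) + 2 * ∑ i, (c i : ℤ) =
        ∑ i, (c i : ℤ) * (2 * ((g i).1.2) ^ 2 + 8 * ((g i).1.1) ^ 2)} ≃
    Σ p : {p : ℕ × ℕ // p ∈ F n},
      ({x : Fin k → ℤ // (p.1.1 : ℤ) = ∑ i, (c i : ℤ) * (x i) ^ 2} ×
       {y : Fin k → ℕ // (∀ i, Odd (y i) ∧ 0 < y i) ∧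
          8 * p.1.2 + ∑ i, c i = ∑ i, c i * (y i) ^ 2}) where
  toFun g :=
    ⟨⟨(aVal c g.1, bVal c n g.1), (mem_F n).mpr (key c n g.1 g.2).2.1⟩,
     ⟨fun i => (g.1 i).1.1, (key c n g.1 g.2).1⟩,
     ⟨fun i => ((g.1 i).1.2).toNat, by
        constructor
        · intro i
          have h1 := (g.1 i).2.1
          have h2 := (g.1 i).2.2
          rw [Int.odd_iff] at h1
          rw [Nat.odd_iff]
          beta_reduce
          omega
        · have hz := (key c n g.1 g.2).2.2
          apply @Nat.cast_injective ℤ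
          push_cast
          simp only [fun i => Int.toNat_of_nonneg (g.1 i).2.2.le]
          exact hz.symm ▸ by ring⟩⟩
  invFun t :=
    ⟨fun i => ⟨(t.2.1.1 i, (t.2.2.1 i : ℤ)),
        (Int.odd_coe_nat _).mpr (t.2.2.2.1 i).1, Int.natCast_pos.mpr (t.2.2.2.1 i).2⟩, by
      obtain ⟨⟨⟨a, b⟩, hp⟩, x, y⟩ := t
      have hab : a + 2 * b = n := (mem_F n).mp hp
      have hx := x.2
      have hy : (8 * (b : ℤ) + ∑ i, (c i : ℤ)) = ∑ i, (c i : ℤ) * ((y.1 i : ℤ)) ^ 2 := by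
        have := y.2.2
        exact_mod_cast congrArg (fun t : ℕ => (t : ℤ)) this
      simp only []
      have hsplit : ∑ i, (c i : ℤ) * (2 * ((y.1 i : ℤ)) ^ 2 + 8 * (x.1 i) ^ 2) =
          2 * ∑ i, (c i : ℤ) * ((y.1 i : ℤ)) ^ 2 + 8 * ∑ i, (c i : ℤ) * (x.1 i) ^ 2 := by
        rw [Finset.mul_sum, Finset.mul_sum, ← Finset.sum_add_distrib]
        exact Finset.sum_congr rfl fun i _ => by ring
      rw [hsplit, ← hy, ← hx]
      have : ((a : ℤ) + 2 * b) = n := by exact_mod_cast hab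
      linarith⟩
  left_inv g := by
    apply Subtype.ext
    funext i
    apply Subtype.ext
    refine Prod.ext rfl ?_
    exact Int.toNat_of_nonneg (g.1 i).2.2.le
  right_inv t := by
    obtain ⟨⟨⟨a, b⟩, hp⟩, ⟨x, hx⟩, ⟨y, hy1, hy2⟩⟩ := t
    have hab : a + 2 * b = n := (mem_F n).mp hp
    have hx' : (a : ℤ) = ∑ i, (c i : ℤ) * (x i) ^ 2 := hx
    have ha : aVal c (fun i => (⟨(x i, (y i : ℤ)),
        (Int.odd_coe_nat _).mpr (hy1 i).1, Int.natCast_pos.mpr (hy1 i).2⟩ : A)) = a := by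
      unfold aVal
      beta_reduce
      rw [← hx', Int.toNat_natCast]
    have hb : bVal c n (fun i => (⟨(x i, (y i : ℤ)),
        (Int.odd_coe_nat _).mpr (hy1 i).1, Int.natCast_pos.mpr (hy1 i).2⟩ : A)) = b := by
      unfold bVal
      rw [ha]
      omega
    subst ha
    subst hb
    refine Sigma.ext (Subtype.ext rfl) (heq_of_eq ?_)
    refine Prod.ext (Subtype.ext rfl) (Subtype.ext ?_)
    funext i
    exact Int.toNat_natCast _

lemma finX (hc : ∀ i, 0 < c i) (a : ℕ) :
    Finite {x : Fin k → ℤ // (a : ℤ) = ∑ i, (c i : ℤ) * (x i) ^ 2} := by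
  have : {x : Fin k → ℤ | (a : ℤ) = ∑ i, (c i : ℤ) * (x i) ^ 2} ⊆
      Set.pi Set.univ (fun _ => Set.Icc (-(a : ℤ)) a) := by
    intro x hx i _
    simp only [Set.mem_setOf_eq] at hx
    have h1 : (c i : ℤ) * (x i) ^ 2 ≤ a := by
      rw [hx]
      exact Finset.single_le_sum (f := fun j => (c j : ℤ) * (x j) ^ 2)
        (fun j _ => by positivity) (Finset.mem_univ i)
    have h2 : (1 : ℤ) ≤ c i := by exact_mod_cast hc i
    have h3 : (x i) ^ 2 ≤ a := by nlinarith [sq_nonneg (x i)]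
    constructor <;> nlinarith [sq_nonneg (x i + 1), sq_nonneg (x i - 1)]
  exact (Set.Finite.subset (Set.Finite.pi (fun i => Set.finite_Icc _ _)) this).to_subtype

lemma finY (hc : ∀ i, 0 < c i) (m : ℕ) :
    Finite {y : Fin k → ℕ // (∀ i, Odd (y i) ∧ 0 < y i) ∧ m = ∑ i, c i * (y i) ^ 2} := by
  have : {y : Fin k → ℕ | (∀ i, Odd (y i) ∧ 0 < y i) ∧ m = ∑ i, c i * (y i) ^ 2} ⊆
      Set.pi Set.univ (fun _ => Set.Iic m) := by
    intro y hy i _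
    obtain ⟨h1, h2⟩ := hy
    have h3 : c i * (y i) ^ 2 ≤ m := h2 ▸ Finset.single_le_sum
      (f := fun j => c j * (y j) ^ 2) (fun j _ => Nat.zero_le _) (Finset.mem_univ i)
    have := hc i
    have := (h1 i).2
    simp only [Set.mem_Iic]
    nlinarith
  exact (Set.Finite.subset (Set.Finite.pi (fun i => Set.finite_Iic _)) this).to_subtype

lemma natcard_sigma {ι : Type*} [Fintype ι] (B : ι → Type*) [hB : ∀ i, Finite (B i)] :
    Nat.card (Sigma B) = ∑ i, Nat.card (B i) := by
  have := fun i => Fintype.ofFinite (B i)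
  simp only [Nat.card_eq_fintype_card]
  exact Fintype.card_sigma

end S19

theorem stmt19 (k : ℕ) (c : Fin k → ℕ) (hc : ∀ i, 0 < c i) (n : ℕ) (hn : 0 < n) :
    Nat.card {y : Fin k ⊕ Fin k → ℕ // (∀ i, Odd (y i) ∧ 0 < y i) ∧
        8 * n + 2 * ∑ i, c i = ∑ i, Sum.elim c c i * (y i) ^ 2} =
      ∑ p ∈ (Finset.range (n + 1) ×ˢ Finset.range (n + 1)).filter
          (fun p => p.1 + 2 * p.2 = n),
        Nat.card {x : Fin k → ℤ // (p.1 : ℤ) = ∑ i, (c i : ℤ) * (x i) ^ 2} *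
        Nat.card {y : Fin k → ℕ // (∀ i, Odd (y i) ∧ 0 < y i) ∧
          8 * p.2 + ∑ i, c i = ∑ i, c i * (y i) ^ 2} := by
  classical
  have e0 := (S19.equiv1 c n).trans ((S19.equiv2 c n).symm.trans (S19.equiv3 c n))
  rw [Nat.card_congr e0]
  haveI : ∀ p : {p : ℕ × ℕ // p ∈ S19.F n},
      Finite ({x : Fin k → ℤ // (p.1.1 : ℤ) = ∑ i, (c i : ℤ) * (x i) ^ 2} ×
        {y : Fin k → ℕ // (∀ i, Odd (y i) ∧ 0 < y i) ∧
          8 * p.1.2 + ∑ i, c i = ∑ i, c i * (y i) ^ 2}) := by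
    intro p
    haveI := S19.finX c hc p.1.1
    haveI := S19.finY c hc (8 * p.1.2 + ∑ i, c i)
    infer_instance
  rw [S19.natcard_sigma]
  rw [show ((Finset.range (n + 1) ×ˢ Finset.range (n + 1)).filter
      (fun p => p.1 + 2 * p.2 = n)) = S19.F n from rfl]
  rw [← Finset.sum_coe_sort (S19.F n) (fun p =>
      Nat.card {x : Fin k → ℤ // (p.1 : ℤ) = ∑ i, (c i : ℤ) * (x i) ^ 2} *
      Nat.card {y : Fin k → ℕ // (∀ i, Odd (y i) ∧ 0 < y i) ∧
          8 * p.2 + ∑ i, c i = ∑ i, c i * (y i) ^ 2})]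
  exact Finset.sum_congr rfl fun p _ => Nat.card_prod _ _
end
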